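/- If H and K are subgroups of a finite group G, then m_G(H) · m_G(K) ≤ m_G(⟨H, K⟩) · m_G(H ∩ K). -/

import Mathlib

/-- The Chermak-Delgado measure of a subgroup `H` of `G`: `|H| * |C_G(H)|`. -/
noncomputable def cdMeasure {G : Type*} [Group G] (H : Subgroup G) : ℕ :=
  Nat.card H * Nat.card (Subgroup.centralizer (H : Set G))

/-- The Chermak-Delgado lattice: subgroups of maximal Chermak-Delgado measure. -/
def CD (G : Type*) [Group G] : Set (Subgroup G) :=
  {H : Subgroup G | ∀ K : Subgroup G, cdMeasure K ≤ cdMeasure H}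

lemma centralizer_sup_eq {G : Type*} [Group G] (H K : Subgroup G) :
    Subgroup.centralizer ((H ⊔ K : Subgroup G) : Set G) =
      Subgroup.centralizer (H : Set G) ⊓ Subgroup.centralizer (K : Set G) := by
  ext x
  rw [← Subgroup.zpowers_le, Subgroup.le_centralizer_iff, sup_le_iff, Subgroup.mem_inf]
  exact and_congr (by rw [Subgroup.le_centralizer_iff, Subgroup.zpowers_le])
    (by rw [Subgroup.le_centralizer_iff, Subgroup.zpowers_le])

lemma card_mul_card_le_sup_mul_inf {G : Type*} [Group G] [Finite G] (H K : Subgroup G) :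
    Nat.card H * Nat.card K ≤ Nat.card ↥(H ⊔ K) * Nat.card ↥(H ⊓ K) := by
  have h1 : Nat.card K = H.relIndex K * Nat.card ↥(H ⊓ K) := by
    have := ((H ⊓ K).subgroupOf K).index_mul_card
    rw [Nat.card_congr (Subgroup.subgroupOfEquivOfLe (inf_le_right : H ⊓ K ≤ K)).toEquiv] at this
    rw [← this, ← Subgroup.inf_relIndex_right]
    rfl
  have h2 : Nat.card ↥(H ⊔ K) = H.relIndex (H ⊔ K) * Nat.card H := by
    have := ((H ⊓ (H ⊔ K)).subgroupOf (H ⊔ K)).index_mul_card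
    rw [Nat.card_congr
      (Subgroup.subgroupOfEquivOfLe (inf_le_right : H ⊓ (H ⊔ K) ≤ H ⊔ K)).toEquiv] at this
    rw [inf_of_le_left (le_sup_left : H ≤ H ⊔ K)] at this
    rw [← this, ← Subgroup.inf_relIndex_right, inf_of_le_left (le_sup_left : H ≤ H ⊔ K)]
    rfl
  have hne : H.relIndex (H ⊔ K) ≠ 0 := by
    have : (H.subgroupOf (H ⊔ K)).index ≠ 0 := Subgroup.index_ne_zero_of_finite
    exact this
  have hle : H.relIndex K ≤ H.relIndex (H ⊔ K) :=
    Subgroup.relIndex_le_of_le_right le_sup_right hne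
  calc Nat.card H * Nat.card K = H.relIndex K * Nat.card H * Nat.card ↥(H ⊓ K) := by
        rw [h1]; ring
    _ ≤ H.relIndex (H ⊔ K) * Nat.card H * Nat.card ↥(H ⊓ K) := by
        exact Nat.mul_le_mul_right _ (Nat.mul_le_mul_right _ hle)
    _ = Nat.card ↥(H ⊔ K) * Nat.card ↥(H ⊓ K) := by rw [h2]

theorem stmt_1 {G : Type*} [Group G] [Finite G] (H K : Subgroup G) :
    cdMeasure H * cdMeasure K ≤ cdMeasure (H ⊔ K) * cdMeasure (H ⊓ K) := by
  unfold cdMeasure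
  set A := Subgroup.centralizer (H : Set G)
  set B := Subgroup.centralizer (K : Set G)
  have hAB : Nat.card A * Nat.card B ≤ Nat.card ↥(A ⊔ B) * Nat.card ↥(A ⊓ B) :=
    card_mul_card_le_sup_mul_inf A B
  have hinf : A ⊓ B = Subgroup.centralizer ((H ⊔ K : Subgroup G) : Set G) :=
    (centralizer_sup_eq H K).symm
  have hsuple : A ⊔ B ≤ Subgroup.centralizer ((H ⊓ K : Subgroup G) : Set G) := by
    apply sup_le
    · exact Subgroup.centralizer_le (SetLike.coe_subset_coe.mpr inf_le_left)
    · exact Subgroup.centralizer_le (SetLike.coe_subset_coe.mpr inf_le_right)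
  have hsup : Nat.card ↥(A ⊔ B) ≤
      Nat.card (Subgroup.centralizer ((H ⊓ K : Subgroup G) : Set G)) :=
    Subgroup.card_le_of_le hsuple
  have hHK : Nat.card H * Nat.card K ≤ Nat.card ↥(H ⊔ K) * Nat.card ↥(H ⊓ K) :=
    card_mul_card_le_sup_mul_inf H K
  calc Nat.card H * Nat.card A * (Nat.card K * Nat.card B)
      = (Nat.card H * Nat.card K) * (Nat.card A * Nat.card B) := by ring
    _ ≤ (Nat.card ↥(H ⊔ K) * Nat.card ↥(H ⊓ K)) * (Nat.card ↥(A ⊔ B) * Nat.card ↥(A ⊓ B)) :=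
        Nat.mul_le_mul hHK hAB
    _ ≤ (Nat.card ↥(H ⊔ K) * Nat.card ↥(H ⊓ K)) *
          (Nat.card (Subgroup.centralizer ((H ⊓ K : Subgroup G) : Set G)) *
           Nat.card (Subgroup.centralizer ((H ⊔ K : Subgroup G) : Set G))) := by
        rw [hinf]
        exact Nat.mul_le_mul_left _ (Nat.mul_le_mul_right _ hsup)
    _ = Nat.card ↥(H ⊔ K) * Nat.card (Subgroup.centralizer ((H ⊔ K : Subgroup G) : Set G)) *
          (Nat.card ↥(H ⊓ K) * Nat.card (Subgroup.centralizer ((H ⊓ K : Subgroup G) : Set G))) := by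
        ring
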